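/- Let k be a field of characteristic different from 2. (i) For every a ∈ k*, the happy normalized 3-cocycle h_a on C₂×C₂ with coefficients in k* is a 3-coboundary. (ii) For every b ∈ k*, the happy normalized 3-cocycle g_b is a 3-coboundary if and only if b has a square root in k*. -/

import Mathlib

def IsCocycle {k : Type*} [Field k] {G : Type*} [Group G] (φ : G → G → G → kˣ) : Prop :=
  ∀ x y z t : G, φ y z t * φ x (y * z) t * φ x y z = φ (x * y) z t * φ x y (z * t)

def IsNormalized {k : Type*} [Field k] {G : Type*} [Group G] (φ : G → G → G → kˣ) : Prop :=
  ∀ x z : G, φ x 1 z = 1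

def d2 {k : Type*} [Field k] {G : Type*} [Group G] (g : G → G → kˣ) : G → G → G → kˣ :=
  fun x y z => g y z * (g (x * y) z)⁻¹ * g x (y * z) * (g x y)⁻¹

def IsCoboundary {k : Type*} [Field k] {G : Type*} [Group G] (φ : G → G → G → kˣ) : Prop :=
  ∃ g : G → G → kˣ, φ = d2 g

/-- The Klein four-group `C₂ × C₂`, written multiplicatively. -/
abbrev K : Type := Multiplicative (ZMod 2 × ZMod 2)

def σ : K := Multiplicative.ofAdd (1, 0)
def τ : K := Multiplicative.ofAdd (0, 1)
def ρ : K := Multiplicative.ofAdd (1, 1)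

/-- The happy normalized 3-cocycle `h_a` on the Klein group. -/
def hA {k : Type*} [Field k] (a : kˣ) : K → K → K → kˣ := fun x y z =>
  if x ≠ 1 ∧ y = z ∧ y ≠ 1 ∧ x ≠ y then a
  else if x = y ∧ x ≠ 1 ∧ z ≠ 1 ∧ y ≠ z then a⁻¹
  else 1

/-- The happy normalized 3-cocycle `g_b` on the Klein group. -/
def gB {k : Type*} [Field k] (b : kˣ) : K → K → K → kˣ := fun x y z =>
  if (x, y, z) = (σ, τ, σ) ∨ (x, y, z) = (ρ, σ, ρ) ∨ (x, y, z) = (τ, ρ, τ) then b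
  else if (x, y, z) = (τ, σ, τ) ∨ (x, y, z) = (σ, ρ, σ) ∨ (x, y, z) = (ρ, τ, ρ) then b⁻¹
  else 1

lemma K_cases' (x : K) : x = 1 ∨ x = σ ∨ x = τ ∨ x = ρ := by revert x; decide

theorem statement11 {k : Type*} [Field k] (hk : ringChar k ≠ 2) :
    (∀ a : kˣ, IsCoboundary (hA a)) ∧
    (∀ b : kˣ, IsCoboundary (gB b) ↔ ∃ d : kˣ, d ^ 2 = b) := by
  constructor
  · intro a
    refine ⟨fun x y => if x = 1 ∨ y = 1 then a else 1, ?_⟩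
    funext x y z
    rcases K_cases' x with hx|hx|hx|hx <;> rcases K_cases' y with hy|hy|hy|hy <;>
      rcases K_cases' z with hz|hz|hz|hz <;> subst hx hy hz <;>
      simp (config := { decide := true }) [hA, d2]
  · intro b
    constructor
    · rintro ⟨g, hg⟩
      refine ⟨g σ ρ * (g ρ σ)⁻¹, ?_⟩
      have e1 : gB b 1 1 τ = d2 g 1 1 τ := by rw [hg]
      have e2 : gB b σ σ τ = d2 g σ σ τ := by rw [hg]
      have e3 : gB b σ τ σ = d2 g σ τ σ := by rw [hg]
      have e4 : gB b τ 1 1 = d2 g τ 1 1 := by rw [hg]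
      have e5 : gB b τ σ σ = d2 g τ σ σ := by rw [hg]
      have hb : b = d2 g 1 1 τ * d2 g σ σ τ * d2 g σ τ σ * d2 g τ 1 1 * d2 g τ σ σ := by
        rw [← e1, ← e2, ← e3, ← e4, ← e5]
        simp (config := { decide := true }) [gB]
      rw [hb]
      simp only [d2, show (1:K)*1 = 1 from rfl, show σ*σ = 1 by decide, show σ*τ = ρ by decide,
          show τ*σ = ρ by decide, show τ*(1:K) = τ by decide, show (1:K)*τ = τ by decide,
          one_mul, mul_one]
      rw [← Units.val_inj]
      simp only [Units.val_mul, Units.val_pow_eq_pow_val, Units.val_inv_eq_inv_val]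
      field_simp
    · rintro ⟨d, rfl⟩
      refine ⟨fun x y =>
        if (x, y) = (σ, σ) ∨ (x, y) = (σ, ρ) ∨ (x, y) = (τ, σ) then d
        else if (x, y) = (τ, ρ) then d⁻¹ else 1, ?_⟩
      funext x y z
      rcases K_cases' x with hx|hx|hx|hx <;> rcases K_cases' y with hy|hy|hy|hy <;>
        rcases K_cases' z with hz|hz|hz|hz <;> subst hx hy hz <;>
        simp (config := { decide := true }) [gB, d2, sq]
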